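/- arXiv:2312.01417 — 2 statements merged into one kernel-verified Lean document; each statement's English description precedes it below -/
import Mathlib

section
/- The number of integer points of the Gelfand–Zetlin polytope GZ(λ) equals the product ∏_{1 ≤ i < j ≤ n} (λ_i − λ_j + j − i)/(j − i) (Weyl dimension formula). -/
open Finset

namespace GZaux


lemma sum_desc_aux (j k : ℕ) (l : ℤ) :
    ((j:ℤ)+1) * ∑ x ∈ Finset.Ico l (l+k), (descPochhammer ℤ j).eval x
      = (descPochhammer ℤ (j+1)).eval (l+k) - (descPochhammer ℤ (j+1)).eval l := by
  induction k with
  | zero => simp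
  | succ m ih =>
      have hins : Finset.Ico l (l+(m+1:ℕ)) = insert (l+m) (Finset.Ico l (l+m)) := by
        ext x; simp only [Finset.mem_Ico, Finset.mem_insert]; push_cast; omega
      rw [hins, Finset.sum_insert (by simp)]
      have h1 : (descPochhammer ℤ (j+1)).eval (l+m+1) = (l+m+1) * (descPochhammer ℤ j).eval (l+m) := by
        rw [descPochhammer_succ_left]
        simp [Polynomial.eval_comp]
      have h2 : (descPochhammer ℤ (j+1)).eval (l+m) = (descPochhammer ℤ j).eval (l+m) * (l+m - j) := by
        rw [descPochhammer_succ_right]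
        simp
      have hcast : l + ((m+1:ℕ):ℤ) = l + m + 1 := by push_cast; ring
      rw [hcast, h1]
      linear_combination ih + h2

lemma sum_desc (j : ℕ) (l u : ℤ) (h : l ≤ u) :
    ((j:ℤ)+1) * ∑ x ∈ Finset.Ico l u, (descPochhammer ℤ j).eval x
      = (descPochhammer ℤ (j+1)).eval u - (descPochhammer ℤ (j+1)).eval l := by
  have hk : u = l + ((u - l).toNat : ℤ) := by omega
  rw [hk]
  exact sum_desc_aux j _ l

lemma prod_neg' {α : Type*} (s : Finset α) (f : α → ℤ) :
    ∏ i ∈ s, (-f i) = (-1)^s.card * ∏ i ∈ s, f i := by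
  rw [← Finset.prod_const, ← Finset.prod_mul_distrib]
  simp

lemma fin_prod_succ (n : ℕ) : ∏ i : Fin n, ((i:ℤ)+1) = (n.factorial : ℤ) := by
  induction n with
  | zero => simp
  | succ m ih =>
      rw [Fin.prod_univ_castSucc]
      simp only [Fin.coe_castSucc, ih, Fin.val_last, Nat.factorial_succ]
      push_cast
      ring

lemma Ico_int_singleton (a : ℤ) : Finset.Ico a (a+1) = {a} := by
  ext x; simp only [Finset.mem_Ico, Finset.mem_singleton]; omega



noncomputable def Nmat (n : ℕ) (a : Fin (n+1) → ℤ) : Matrix (Fin (n+1)) (Fin (n+1)) ℤ :=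
  Matrix.of fun i j => (descPochhammer ℤ (j:ℕ)).eval (a i)

def Lmat (n : ℕ) : Matrix (Fin (n+1)) (Fin (n+1)) ℤ :=
  Matrix.of fun i j => if (i:ℕ) = (j:ℕ) then 1 else if (i:ℕ)+1 = (j:ℕ) then -1 else 0

noncomputable def Umat (n : ℕ) (a : Fin (n+1) → ℤ) : Matrix (Fin n) (Fin n) ℤ :=
  Matrix.of fun i j => (descPochhammer ℤ ((j:ℕ)+1)).eval (a i.castSucc)
    - (descPochhammer ℤ ((j:ℕ)+1)).eval (a i.succ)

lemma det_Nmat (n : ℕ) (a : Fin (n+1) → ℤ) :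
    (Nmat n a).det = (Matrix.vandermonde a).det := by
  rw [Matrix.det_eval_matrixOfPolynomials_eq_det_vandermonde a
    (fun j : Fin (n+1) => descPochhammer ℤ (j:ℕ))
    (fun j => descPochhammer_natDegree (R := ℤ) (j:ℕ)) (fun j => monic_descPochhammer ℤ (j:ℕ))]
  rfl

lemma det_Lmat (n : ℕ) : (Lmat n).det = 1 := by
  rw [Matrix.det_of_upperTriangular]
  · simp [Lmat]
  · intro i j hji
    simp only [Lmat, Matrix.of_apply, id] at hji ⊢
    have h1 : (i:ℕ) ≠ (j:ℕ) := by omega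
    have h2 : (i:ℕ)+1 ≠ (j:ℕ) := by omega
    simp [h1, h2]

lemma LN_last (n : ℕ) (a : Fin (n+1) → ℤ) (j : Fin (n+1)) :
    (Lmat n * Nmat n a) (Fin.last n) j = Nmat n a (Fin.last n) j := by
  rw [Matrix.mul_apply]
  have he : ∀ k : Fin (n+1), Lmat n (Fin.last n) k * Nmat n a k j
      = if Fin.last n = k then Nmat n a k j else 0 := by
    intro k
    simp only [Lmat, Matrix.of_apply, Fin.val_last]
    have hk : (k:ℕ) < n+1 := k.isLt
    by_cases h1 : n = (k:ℕ)
    · have : Fin.last n = k := by rw [Fin.ext_iff]; simpa using h1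
      simp [h1, this]
    · have h2 : ¬ (n+1 = (k:ℕ)) := by omega
      have : ¬ (Fin.last n = k) := by rw [Fin.ext_iff]; simpa using h1
      simp [h1, h2, this]
  rw [Finset.sum_congr rfl (fun k _ => he k), Finset.sum_ite_eq]
  simp

lemma LN_castSucc (n : ℕ) (a : Fin (n+1) → ℤ) (i : Fin n) (j : Fin (n+1)) :
    (Lmat n * Nmat n a) i.castSucc j = Nmat n a i.castSucc j - Nmat n a i.succ j := by
  rw [Matrix.mul_apply]
  have he : ∀ k : Fin (n+1), Lmat n i.castSucc k * Nmat n a k j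
      = (if i.castSucc = k then Nmat n a k j else 0)
        + (if i.succ = k then -(Nmat n a k j) else 0) := by
    intro k
    simp only [Lmat, Matrix.of_apply, Fin.coe_castSucc]
    have e1 : (i.castSucc = k) ↔ ((i:ℕ) = (k:ℕ)) := by rw [Fin.ext_iff]; simp
    have e2 : (i.succ = k) ↔ ((i:ℕ)+1 = (k:ℕ)) := by rw [Fin.ext_iff]; simp
    by_cases h1 : (i:ℕ) = (k:ℕ)
    · have h2 : ¬((i:ℕ)+1 = (k:ℕ)) := by omega
      simp [h1, h2, e1.mpr h1, e2]
    · by_cases h2 : (i:ℕ)+1 = (k:ℕ)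
      · simp [h1, h2, e2.mpr h2, e1, h1]
      · simp [h1, h2, e1, e2]
  rw [Finset.sum_congr rfl (fun k _ => he k), Finset.sum_add_distrib,
    Finset.sum_ite_eq, Finset.sum_ite_eq]
  simp [sub_eq_add_neg]

lemma det_N_eq_det_U (n : ℕ) (a : Fin (n+1) → ℤ) :
    (Nmat n a).det = (-1:ℤ)^n * (Umat n a).det := by
  have hdet : (Nmat n a).det = (Lmat n * Nmat n a).det := by
    rw [Matrix.det_mul, det_Lmat, one_mul]
  rw [hdet, Matrix.det_succ_column_zero]
  rw [Finset.sum_eq_single (Fin.last n)]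
  · have h0 : (Lmat n * Nmat n a) (Fin.last n) 0 = 1 := by
      rw [LN_last]; simp [Nmat]
    rw [h0, Fin.val_last, mul_one]
    have hsub : (Lmat n * Nmat n a).submatrix (Fin.last n).succAbove Fin.succ = Umat n a := by
      ext i j
      rw [Matrix.submatrix_apply, Fin.succAbove_last, LN_castSucc]
      simp [Nmat, Umat, Fin.val_succ]
    rw [hsub]
  · intro i _ hne
    have hi : (i:ℕ) < n := by
      rcases Nat.lt_or_ge (i:ℕ) n with h|h
      · exact h
      · exact absurd (by rw [Fin.ext_iff, Fin.val_last]; omega) hne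
    have hic : i = (⟨(i:ℕ), hi⟩ : Fin n).castSucc := by rw [Fin.ext_iff]; simp
    have h0 : (Lmat n * Nmat n a) i 0 = 0 := by
      rw [hic, LN_castSucc]; simp [Nmat]
    rw [h0]; ring
  · simp



noncomputable def boxIco (n : ℕ) (a : Fin (n+1) → ℤ) : Finset (Fin n → ℤ) :=
  Fintype.piFinset (fun i : Fin n => Finset.Ico (a i.succ) (a i.castSucc))

lemma branch (n : ℕ) (a : Fin (n+1) → ℤ) (ha : ∀ i : Fin n, a i.succ ≤ a i.castSucc) :
    (n.factorial : ℤ) * ∑ b ∈ boxIco n a, (Matrix.vandermonde b).det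
    = (-1:ℤ)^n * (Matrix.vandermonde a).det := by
  classical
  set B : Fin n → Finset ℤ := fun i => Finset.Ico (a i.succ) (a i.castSucc) with hB
  have h1 : ∀ b : Fin n → ℤ, (Matrix.vandermonde b).det
      = Matrix.det (Matrix.of fun i j : Fin n => (descPochhammer ℤ (j:ℕ)).eval (b i)) := by
    intro b
    rw [Matrix.det_eval_matrixOfPolynomials_eq_det_vandermonde b
      (fun j : Fin n => descPochhammer ℤ (j:ℕ))
      (fun j => descPochhammer_natDegree (R := ℤ) (j:ℕ))
      (fun j => monic_descPochhammer ℤ (j:ℕ))]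
  have h2 : Matrix.det (Matrix.of fun i j : Fin n => ∑ x ∈ B i, (descPochhammer ℤ (j:ℕ)).eval x)
      = ∑ b ∈ Fintype.piFinset B,
          Matrix.det (Matrix.of fun i j : Fin n => (descPochhammer ℤ (j:ℕ)).eval (b i)) := by
    have hrows : (Matrix.of fun i j : Fin n => ∑ x ∈ B i, (descPochhammer ℤ (j:ℕ)).eval x)
        = fun i => ∑ x ∈ B i, (fun j : Fin n => (descPochhammer ℤ (j:ℕ)).eval x) := by
      funext i
      rw [Finset.sum_fn]
      rfl
    have key := (Matrix.detRowAlternating : ((Fin n → ℤ) [⋀^Fin n]→ₗ[ℤ] ℤ)).toMultilinearMap.map_sum_finset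
      (g := fun (_ : Fin n) (x : ℤ) => (fun j : Fin n => (descPochhammer ℤ (j:ℕ)).eval x)) (A := B)
    rw [AlternatingMap.coe_multilinearMap] at key
    show Matrix.detRowAlternating _ = _
    rw [hrows, key]
    rfl
  have h3 : (Matrix.of fun i j : Fin n =>
        (((j:ℕ):ℤ)+1) * (Matrix.of fun i j : Fin n => ∑ x ∈ B i, (descPochhammer ℤ (j:ℕ)).eval x) i j)
      = Umat n a := by
    ext i j
    simp only [Matrix.of_apply, Umat]
    exact sum_desc (j:ℕ) _ _ (ha i)
  have h4 := Matrix.det_mul_row (fun j : Fin n => (((j:ℕ):ℤ)+1))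
    (Matrix.of fun i j : Fin n => ∑ x ∈ B i, (descPochhammer ℤ (j:ℕ)).eval x)
  rw [h3] at h4
  have h5 : (∏ j : Fin n, (((j:ℕ):ℤ)+1)) = (n.factorial : ℤ) := fin_prod_succ n
  calc (n.factorial : ℤ) * ∑ b ∈ boxIco n a, (Matrix.vandermonde b).det
      = (n.factorial : ℤ) * Matrix.det (Matrix.of fun i j : Fin n => ∑ x ∈ B i, (descPochhammer ℤ (j:ℕ)).eval x) := by
        rw [h2]; congr 1; exact Finset.sum_congr rfl (fun b _ => h1 b)
    _ = (Umat n a).det := by rw [h4, h5]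
    _ = (-1:ℤ)^n * (Matrix.vandermonde a).det := by
        have := det_N_eq_det_U n a
        rw [det_Nmat] at this
        rw [this, ← mul_assoc, ← pow_add, ← two_mul, pow_mul]
        norm_num

def Wprod (n : ℕ) (v : Fin n → ℤ) : ℤ := ∏ i : Fin n, ∏ j ∈ Finset.Ioi i, (v i - v j)

lemma Wprod_shift (n : ℕ) (v : Fin n → ℤ) (c : ℤ) :
    Wprod n (fun i => v i + c) = Wprod n v := by
  unfold Wprod
  apply Finset.prod_congr rfl
  intro i _
  apply Finset.prod_congr rfl
  intro j _
  ring

lemma Wprod_eq_sign_det (n : ℕ) (v : Fin n → ℤ) :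
    Wprod n v = (-1:ℤ)^(n.choose 2) * (Matrix.vandermonde v).det := by
  rw [Matrix.det_vandermonde]
  unfold Wprod
  have h1 : ∀ i : Fin n, ∏ j ∈ Finset.Ioi i, (v i - v j)
      = (-1:ℤ)^(Finset.Ioi i).card * ∏ j ∈ Finset.Ioi i, (v j - v i) := by
    intro i
    rw [← prod_neg']
    apply Finset.prod_congr rfl
    intro j _; ring
  rw [Finset.prod_congr rfl (fun i _ => h1 i), Finset.prod_mul_distrib]
  congr 1
  rw [Finset.prod_pow_eq_pow_sum]
  congr 1
  have h2 : ∀ i : Fin n, (Finset.Ioi i).card = n - 1 - (i:ℕ) := fun i => Fin.card_Ioi i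
  rw [Finset.sum_congr rfl (fun i _ => h2 i), Fin.sum_univ_eq_sum_range]
  rw [Finset.sum_range_reflect (fun i => i) n, Finset.sum_range_id]
  exact (Nat.choose_two_right n).symm




lemma branchW (n : ℕ) (a : Fin (n+1) → ℤ) (ha : ∀ i : Fin n, a i.succ ≤ a i.castSucc) :
    (n.factorial : ℤ) * ∑ b ∈ boxIco n a, Wprod n b = Wprod (n+1) a := by
  have hb := branch n a ha
  have h1 : ∑ b ∈ boxIco n a, Wprod n b
      = (-1:ℤ)^(n.choose 2) * ∑ b ∈ boxIco n a, (Matrix.vandermonde b).det := by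
    rw [Finset.mul_sum]
    exact Finset.sum_congr rfl (fun b _ => Wprod_eq_sign_det n b)
  rw [h1, Wprod_eq_sign_det]
  have hch : ((n+1).choose 2) = n.choose 2 + n := by
    have := Nat.choose_succ_succ' n 1
    simp [Nat.choose_one_right] at this
    omega
  rw [hch, pow_add]
  linear_combination ((-1:ℤ)^(n.choose 2)) * hb

lemma W_delta_succ (n : ℕ) :
    Wprod (n+1) (fun i : Fin (n+1) => -((i:ℕ):ℤ))
      = (n.factorial:ℤ) * Wprod n (fun i : Fin n => -((i:ℕ):ℤ)) := by
  set a0 : Fin (n+1) → ℤ := fun i => (n:ℤ) - (i:ℕ) with ha0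
  have ha : ∀ i : Fin n, a0 i.succ ≤ a0 i.castSucc := by
    intro i
    simp only [a0, Fin.val_succ, Fin.coe_castSucc]
    push_cast
    linarith
  have hbw := branchW n a0 ha
  have hbox : boxIco n a0 = {fun i : Fin n => (n:ℤ) - (i:ℕ) - 1} := by
    unfold boxIco
    rw [← Fintype.piFinset_singleton]
    congr 1
    funext i
    have h1 : a0 i.succ = ((n:ℤ) - (i:ℕ) - 1) := by
      simp only [a0, Fin.val_succ]; push_cast; ring
    have h2 : a0 i.castSucc = ((n:ℤ) - (i:ℕ) - 1) + 1 := by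
      simp only [a0, Fin.coe_castSucc]; push_cast; ring
    rw [h1, h2, Ico_int_singleton]
  rw [hbox, Finset.sum_singleton] at hbw
  have hshift : Wprod n (fun i : Fin n => (n:ℤ) - (i:ℕ) - 1)
      = Wprod n (fun i : Fin n => -((i:ℕ):ℤ)) := by
    have := Wprod_shift n (fun i : Fin n => -((i:ℕ):ℤ)) ((n:ℤ) - 1)
    rw [← this]
    congr 1
    funext i
    ring
  have hshift2 : Wprod (n+1) a0 = Wprod (n+1) (fun i : Fin (n+1) => -((i:ℕ):ℤ)) := by
    have := Wprod_shift (n+1) (fun i : Fin (n+1) => -((i:ℕ):ℤ)) (n:ℤ)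
    rw [← this]
    congr 1
    funext i
    simp only [a0]
    ring
  rw [hshift] at hbw
  rw [← hshift2, ← hbw]

def extF (n : ℕ) (μ : Fin n → ℤ) : ℕ → ℤ := fun k => if h : k < n then μ ⟨k, h⟩ else 0

noncomputable def boxIcc (n : ℕ) (lam : ℕ → ℤ) : Finset (Fin n → ℤ) :=
  Fintype.piFinset (fun i : Fin n => Finset.Icc (lam ((i:ℕ)+1)) (lam (i:ℕ)))

noncomputable def gzc : ℕ → (ℕ → ℤ) → ℕ
  | 0, _ => 1
  | (n+1), lam => ∑ μ ∈ boxIcc n lam, gzc n (extF n μ)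

lemma G (n : ℕ) : ∀ lam : ℕ → ℤ, (∀ i j : ℕ, i ≤ j → j < n → lam j ≤ lam i) →
    (gzc n lam : ℤ) * Wprod n (fun i : Fin n => -((i:ℕ):ℤ))
      = Wprod n (fun i : Fin n => lam (i:ℕ) - ((i:ℕ):ℤ)) := by
  induction n with
  | zero =>
      intro lam _
      simp [gzc, Wprod]
  | succ n ih =>
      intro lam hlam
      set a : Fin (n+1) → ℤ := fun i => lam (i:ℕ) + ((n:ℤ) - (i:ℕ)) with hadef
      have ha : ∀ i : Fin n, a i.succ ≤ a i.castSucc := by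
        intro i
        have h := hlam (i:ℕ) ((i:ℕ)+1) (Nat.le_succ _) (by omega)
        simp only [a, Fin.val_succ, Fin.coe_castSucc]
        push_cast
        linarith
      have hW := branchW n a ha
      -- per-μ identity
      have hper : ∀ μ ∈ boxIcc n lam, (gzc n (extF n μ) : ℤ) * Wprod n (fun i : Fin n => -((i:ℕ):ℤ))
          = Wprod n (fun i : Fin n => μ i + ((n:ℤ) - 1 - (i:ℕ))) := by
        intro μ hμ
        simp only [boxIcc, Fintype.mem_piFinset] at hμ
        have hmono : ∀ i j : ℕ, i ≤ j → j < n → extF n μ j ≤ extF n μ i := by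
          intro i j hij hj
          have hi : i < n := lt_of_le_of_lt hij hj
          simp only [extF, dif_pos hi, dif_pos hj]
          rcases eq_or_lt_of_le hij with rfl | hlt
          · rfl
          · have h1 := (Finset.mem_Icc.mp (hμ ⟨j, hj⟩)).2
            have h2 := (Finset.mem_Icc.mp (hμ ⟨i, hi⟩)).1
            have h3 := hlam (i+1) j hlt (by omega)
            simp only at h1 h2 h3
            linarith
        have := ih (extF n μ) hmono
        rw [this]
        have hvals : (fun i : Fin n => extF n μ (i:ℕ) - ((i:ℕ):ℤ))
            = (fun i : Fin n => (μ i + ((n:ℤ) - 1 - (i:ℕ))) + (1 - (n:ℤ))) := by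
          funext i
          simp only [extF, dif_pos i.isLt, Fin.eta]
          ring
        rw [hvals, Wprod_shift]
      -- reindex the sum
      have hre : ∑ μ ∈ boxIcc n lam, Wprod n (fun i : Fin n => μ i + ((n:ℤ) - 1 - (i:ℕ)))
          = ∑ b ∈ boxIco n a, Wprod n b := by
        apply Finset.sum_nbij' (i := fun μ => fun i : Fin n => μ i + ((n:ℤ) - 1 - (i:ℕ)))
          (j := fun b => fun i : Fin n => b i - ((n:ℤ) - 1 - (i:ℕ)))
        · intro μ hμ
          simp only [boxIcc, boxIco, Fintype.mem_piFinset] at hμ ⊢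
          intro i
          have h := Finset.mem_Icc.mp (hμ i)
          rw [Finset.mem_Ico]
          simp only [a, Fin.val_succ, Fin.coe_castSucc]
          push_cast
          constructor <;> linarith [h.1, h.2]
        · intro b hb
          simp only [boxIcc, boxIco, Fintype.mem_piFinset] at hb ⊢
          intro i
          have h := Finset.mem_Ico.mp (hb i)
          rw [Finset.mem_Icc]
          simp only [a, Fin.val_succ, Fin.coe_castSucc] at h
          push_cast at h ⊢
          constructor <;> linarith [h.1, h.2]
        · intro μ _; funext i; ring
        · intro b _; funext i; ring
        · intro μ _; rfl
      -- assemble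
      have hc : (gzc (n+1) lam : ℤ) = ∑ μ ∈ boxIcc n lam, (gzc n (extF n μ) : ℤ) := by
        rw [show gzc (n+1) lam = ∑ μ ∈ boxIcc n lam, gzc n (extF n μ) from rfl]
        push_cast
        rfl
      rw [hc, W_delta_succ, Finset.sum_mul]
      have : ∑ μ ∈ boxIcc n lam, (gzc n (extF n μ) : ℤ) * ((n.factorial:ℤ) * Wprod n (fun i : Fin n => -((i:ℕ):ℤ)))
          = (n.factorial:ℤ) * ∑ μ ∈ boxIcc n lam, Wprod n (fun i : Fin n => μ i + ((n:ℤ) - 1 - (i:ℕ))) := by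
        rw [Finset.mul_sum]
        apply Finset.sum_congr rfl
        intro μ hμ
        rw [← hper μ hμ]
        ring
      rw [this, hre, hW]
      have : (fun i : Fin (n+1) => lam (i:ℕ) - ((i:ℕ):ℤ))
          = (fun i : Fin (n+1) => a i + (-(n:ℤ))) := by
        funext i; simp only [a]; ring
      rw [this, Wprod_shift]




def Pred (n : ℕ) (lam : ℕ → ℤ) (y : ℕ → ℕ → ℤ) : Prop :=
  (∀ j, j < n → y 0 j = lam (n - 1 - j)) ∧
  (∀ i j, 1 ≤ i → i + j < n → y (i-1) j ≤ y i j ∧ y i j ≤ y (i-1) (j+1)) ∧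
  (∀ i j, n ≤ i + j → y i j = 0)

def toμ (n : ℕ) (y : ℕ → ℕ → ℤ) : Fin n → ℤ := fun i => y 1 (n - 1 - (i:ℕ))
def chop (n : ℕ) (y : ℕ → ℕ → ℤ) : ℕ → ℕ → ℤ := fun i j => if i + j < n then y (i+1) j else 0
def glue (n : ℕ) (lam : ℕ → ℤ) (y' : ℕ → ℕ → ℤ) : ℕ → ℕ → ℤ :=
  fun i j => if i + j < n+1 then (if i = 0 then lam (n - j) else y' (i-1) j) else 0

lemma mem_toμ (n : ℕ) (lam : ℕ → ℤ) (y : ℕ → ℕ → ℤ) (hy : Pred (n+1) lam y) :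
    toμ n y ∈ boxIcc n lam := by
  obtain ⟨h1, h2, h3⟩ := hy
  simp only [boxIcc, Fintype.mem_piFinset]
  intro i
  have hi : (i:ℕ) < n := i.isLt
  have hint := h2 1 (n - 1 - (i:ℕ)) le_rfl (by omega)
  have e0 : y (1-1) (n - 1 - (i:ℕ)) = lam ((i:ℕ)+1) := by
    have := h1 (n - 1 - (i:ℕ)) (by omega)
    rw [this]
    all_goals (congr 1 <;> omega)
  have e1 : y (1-1) ((n - 1 - (i:ℕ)) + 1) = lam (i:ℕ) := by
    have := h1 ((n - 1 - (i:ℕ)) + 1) (by omega)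
    rw [this]
    all_goals (congr 1 <;> omega)
  rw [Finset.mem_Icc]
  rw [e0] at hint
  rw [e1] at hint
  exact ⟨hint.1, hint.2⟩

lemma pred_chop (n : ℕ) (lam : ℕ → ℤ) (y : ℕ → ℕ → ℤ) (hy : Pred (n+1) lam y) :
    Pred n (extF n (toμ n y)) (chop n y) := by
  obtain ⟨h1, h2, h3⟩ := hy
  refine ⟨?_, ?_, ?_⟩
  · intro j hj
    have hlt : n - 1 - j < n := by omega
    simp only [chop, extF, toμ, if_pos (by omega : 0 + j < n), dif_pos hlt]
    all_goals (congr 1 <;> omega)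
  · intro i j hi hij
    have e0 : chop n y i j = y (i+1) j := if_pos hij
    have e1 : chop n y (i-1) j = y i j := by
      rw [chop, if_pos (by omega : (i-1) + j < n)]
      all_goals (congr 1 <;> omega)
    have e2 : chop n y (i-1) (j+1) = y i (j+1) := by
      rw [chop, if_pos (by omega : (i-1) + (j+1) < n)]
      all_goals (congr 1 <;> omega)
    have hint := h2 (i+1) j (by omega) (by omega)
    rw [Nat.add_sub_cancel] at hint
    rw [e0, e1, e2]
    exact hint
  · intro i j hij
    exact if_neg (by omega)

lemma pred_glue (n : ℕ) (lam : ℕ → ℤ) (μ : Fin n → ℤ) (hμ : μ ∈ boxIcc n lam)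
    (y' : ℕ → ℕ → ℤ) (hy' : Pred n (extF n μ) y') :
    Pred (n+1) lam (glue n lam y') := by
  simp only [boxIcc, Fintype.mem_piFinset] at hμ
  obtain ⟨h1, h2, h3⟩ := hy'
  refine ⟨?_, ?_, ?_⟩
  · intro j hj
    rw [glue, if_pos (by omega : 0 + j < n+1), if_pos rfl]
    all_goals (congr 1 <;> omega)
  · intro i j hi hij
    rcases Nat.lt_or_ge i 2 with h2i | h2i
    · have hi1 : i = 1 := by omega
      subst hi1
      have hj : j < n := by omega
      have e0 : glue n lam y' 0 j = lam (n - j) := by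
        rw [glue, if_pos (by omega : 0 + j < n+1), if_pos rfl]
      have e1 : glue n lam y' 1 j = y' 0 j := by
        rw [glue, if_pos (by omega : 1 + j < n+1), if_neg (by omega)]
      have e2 : glue n lam y' 0 (j+1) = lam (n - 1 - j) := by
        rw [glue, if_pos (by omega : 0 + (j+1) < n+1), if_pos rfl]
        all_goals (congr 1 <;> omega)
      have e3 : y' 0 j = μ ⟨n - 1 - j, by omega⟩ := by
        rw [h1 j hj, extF, dif_pos (by omega : n - 1 - j < n)]
      have hbd := Finset.mem_Icc.mp (hμ ⟨n - 1 - j, by omega⟩)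
      simp only at hbd
      have hub : μ ⟨n - 1 - j, by omega⟩ ≤ lam (n - 1 - j) := hbd.2
      have hlb : lam ((n - 1 - j) + 1) ≤ μ ⟨n - 1 - j, by omega⟩ := hbd.1
      have enj : (n - 1 - j) + 1 = n - j := by omega
      rw [enj] at hlb
      simp only [Nat.sub_self]
      rw [e0, e1, e2, e3]
      exact ⟨hlb, hub⟩
    · have e0 : glue n lam y' i j = y' (i-1) j := by
        rw [glue, if_pos (by omega : i + j < n+1), if_neg (by omega)]
      have e1 : glue n lam y' (i-1) j = y' (i-2) j := by
        rw [glue, if_pos (by omega : (i-1) + j < n+1), if_neg (by omega)]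
        all_goals (congr 1 <;> omega)
      have e2 : glue n lam y' (i-1) (j+1) = y' (i-2) (j+1) := by
        rw [glue, if_pos (by omega : (i-1) + (j+1) < n+1), if_neg (by omega)]
        all_goals (congr 1 <;> omega)
      have hint := h2 (i-1) j (by omega) (by omega)
      have ei2 : i - 1 - 1 = i - 2 := by omega
      rw [ei2] at hint
      rw [e0, e1, e2]
      exact hint
  · intro i j hij
    exact if_neg (by omega)

lemma toμ_glue (n : ℕ) (lam : ℕ → ℤ) (μ : Fin n → ℤ) (y' : ℕ → ℕ → ℤ)
    (hy' : Pred n (extF n μ) y') : toμ n (glue n lam y') = μ := by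
  obtain ⟨h1, h2, h3⟩ := hy'
  funext i
  have hi : (i:ℕ) < n := i.isLt
  have e0 : toμ n (glue n lam y') i = y' 0 (n - 1 - (i:ℕ)) := by
    rw [toμ, glue, if_pos (by omega : 1 + (n - 1 - (i:ℕ)) < n+1), if_neg (by omega)]
  rw [e0, h1 (n - 1 - (i:ℕ)) (by omega), extF]
  rw [dif_pos (by omega : n - 1 - (n - 1 - (i:ℕ)) < n)]
  congr 1
  rw [Fin.ext_iff]
  simp only
  omega

lemma chop_glue (n : ℕ) (lam : ℕ → ℤ) (μ : Fin n → ℤ) (y' : ℕ → ℕ → ℤ)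
    (hy' : Pred n (extF n μ) y') : chop n (glue n lam y') = y' := by
  obtain ⟨h1, h2, h3⟩ := hy'
  funext i j
  by_cases hij : i + j < n
  · rw [chop, if_pos hij, glue, if_pos (by omega : (i+1) + j < n+1), if_neg (by omega)]
    all_goals (congr 1 <;> omega)
  · rw [chop, if_neg hij, h3 i j (by omega)]

lemma glue_chop (n : ℕ) (lam : ℕ → ℤ) (y : ℕ → ℕ → ℤ) (hy : Pred (n+1) lam y) :
    glue n lam (chop n y) = y := by
  obtain ⟨h1, h2, h3⟩ := hy
  funext i j
  by_cases hij : i + j < n + 1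
  · rcases Nat.eq_zero_or_pos i with rfl | hi
    · rw [glue, if_pos hij, if_pos rfl, h1 j (by omega)]
      all_goals (congr 1 <;> omega)
    · rw [glue, if_pos hij, if_neg (by omega), chop, if_pos (by omega : (i-1) + j < n)]
      all_goals (congr 1 <;> omega)
  · rw [glue, if_neg hij, (h3 i j (by omega)).symm]

lemma key (n : ℕ) : ∀ lam : ℕ → ℤ,
    Nat.card {y : ℕ → ℕ → ℤ // Pred n lam y} = gzc n lam
      ∧ Finite {y : ℕ → ℕ → ℤ // Pred n lam y} := by
  induction n with
  | zero =>
      intro lam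
      have hu : ∀ y : ℕ → ℕ → ℤ, Pred 0 lam y ↔ y = fun _ _ => 0 := by
        intro y
        constructor
        · rintro ⟨-, -, h3⟩
          funext i j
          exact h3 i j (Nat.zero_le _)
        · rintro rfl
          exact ⟨fun j hj => absurd hj (by omega), fun i j _ hij => absurd hij (by omega),
            fun _ _ _ => rfl⟩
      have e : {y : ℕ → ℕ → ℤ // Pred 0 lam y} ≃ Unit :=
        { toFun := fun _ => Unit.unit
          invFun := fun _ => ⟨fun _ _ => 0, (hu _).mpr rfl⟩
          left_inv := fun y => Subtype.ext ((hu y.1).mp y.2).symm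
          right_inv := fun _ => rfl }
      constructor
      · rw [Nat.card_congr e]
        simp [gzc]
      · exact Finite.of_equiv _ e.symm
  | succ n ih =>
      intro lam
      have e : {y : ℕ → ℕ → ℤ // Pred (n+1) lam y}
          ≃ Σ μ : {μ : Fin n → ℤ // μ ∈ boxIcc n lam}, {y' : ℕ → ℕ → ℤ // Pred n (extF n μ.1) y'} :=
        { toFun := fun y => ⟨⟨toμ n y.1, mem_toμ n lam y.1 y.2⟩,
            ⟨chop n y.1, pred_chop n lam y.1 y.2⟩⟩
          invFun := fun p => ⟨glue n lam p.2.1,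
            pred_glue n lam p.1.1 p.1.2 p.2.1 p.2.2⟩
          left_inv := fun y => Subtype.ext (glue_chop n lam y.1 y.2)
          right_inv := by
            rintro ⟨⟨μ, hμ⟩, ⟨y', hy'⟩⟩
            have hμ1 : toμ n (glue n lam y') = μ := toμ_glue n lam μ y' hy'
            have hy1 : chop n (glue n lam y') = y' := chop_glue n lam μ y' hy'
            dsimp only
            refine Sigma.ext (Subtype.ext ?_) ?_
            · exact hμ1
            · rw [Subtype.heq_iff_coe_eq]
              · exact hy1
              · intro x
                dsimp only
                rw [hμ1] }
      haveI hfin : ∀ μ : {μ : Fin n → ℤ // μ ∈ boxIcc n lam},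
          Finite {y' : ℕ → ℕ → ℤ // Pred n (extF n μ.1) y'} := fun μ => (ih _).2
      constructor
      · rw [Nat.card_congr e]
        letI : ∀ μ : {μ : Fin n → ℤ // μ ∈ boxIcc n lam},
            Fintype {y' : ℕ → ℕ → ℤ // Pred n (extF n μ.1) y'} := fun μ => Fintype.ofFinite _
        rw [Nat.card_eq_fintype_card, Fintype.card_sigma]
        have : ∀ μ : {μ : Fin n → ℤ // μ ∈ boxIcc n lam},
            Fintype.card {y' : ℕ → ℕ → ℤ // Pred n (extF n μ.1) y'} = gzc n (extF n μ.1) := by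
          intro μ
          rw [← Nat.card_eq_fintype_card]
          exact (ih _).1
        rw [Finset.sum_congr rfl (fun μ _ => this μ)]
        show _ = gzc (n+1) lam
        rw [show gzc (n+1) lam = ∑ μ ∈ boxIcc n lam, gzc n (extF n μ) from rfl]
        exact Finset.sum_coe_sort (boxIcc n lam) (fun μ => gzc n (extF n μ))
      · exact Finite.of_equiv _ e.symm


lemma Ioi_fin_filter {n : ℕ} (i : Fin n) :
    Finset.Ioi i = Finset.univ.filter (fun j => i < j) := by
  ext j; simp

lemma prod_pairs (n : ℕ) (f : ℕ → ℕ → ℤ) :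
    ∏ p ∈ (Finset.range n ×ˢ Finset.range n).filter (fun p => p.1 < p.2), f p.1 p.2
      = ∏ i : Fin n, ∏ j ∈ Finset.Ioi i, f (i:ℕ) (j:ℕ) := by
  rw [Finset.prod_filter, Finset.prod_product,
    ← Fin.prod_univ_eq_prod_range (fun i => ∏ j ∈ Finset.range n, if i < j then f i j else 1) n]
  apply Finset.prod_congr rfl
  intro i _
  rw [← Fin.prod_univ_eq_prod_range (fun j => if (i:ℕ) < j then f (i:ℕ) j else 1) n,
    Ioi_fin_filter, Finset.prod_filter]
  apply Finset.prod_congr rfl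
  intro j _
  congr 1

end GZaux


/-- **Weyl dimension formula for GZ patterns.**  The number of
Gelfand–Zetlin patterns (triangular integer arrays `y i j` defined for `i + j < n`,
row `0` being the fixed top row `(λ_n, …, λ_1)`, satisfying the interlacing
inequalities `y (i-1) j ≤ y i j ≤ y (i-1) (j+1)`; entries outside the triangle are
normalized to `0` so that the set is finite) equals
`∏_{1 ≤ i < j ≤ n} (λ_i - λ_j + j - i)/(j - i)`, stated here with denominators
cleared. -/
theorem gz_pattern_count_weyl (n : ℕ) (lam : ℕ → ℤ)
    (hlam : ∀ i j : ℕ, i ≤ j → j < n → lam j ≤ lam i) :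
    (Nat.card {y : ℕ → ℕ → ℤ //
        (∀ j, j < n → y 0 j = lam (n - 1 - j)) ∧
        (∀ i j, 1 ≤ i → i + j < n → y (i-1) j ≤ y i j ∧ y i j ≤ y (i-1) (j+1)) ∧
        (∀ i j, n ≤ i + j → y i j = 0)} : ℤ) *
      ∏ p ∈ (Finset.range n ×ˢ Finset.range n).filter (fun p => p.1 < p.2),
        ((p.2 : ℤ) - (p.1 : ℤ)) =
    ∏ p ∈ (Finset.range n ×ˢ Finset.range n).filter (fun p => p.1 < p.2),
      (lam p.1 - lam p.2 + (p.2 : ℤ) - (p.1 : ℤ)) := by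
  have h1 : Nat.card {y : ℕ → ℕ → ℤ //
        (∀ j, j < n → y 0 j = lam (n - 1 - j)) ∧
        (∀ i j, 1 ≤ i → i + j < n → y (i-1) j ≤ y i j ∧ y i j ≤ y (i-1) (j+1)) ∧
        (∀ i j, n ≤ i + j → y i j = 0)} = GZaux.gzc n lam := (GZaux.key n lam).1
  rw [h1]
  have hp1 := GZaux.prod_pairs n (fun i j => (j:ℤ) - (i:ℤ))
  have hp2 := GZaux.prod_pairs n (fun i j => lam i - lam j + (j:ℤ) - (i:ℤ))
  rw [hp1, hp2]
  have e1 : ∏ i : Fin n, ∏ j ∈ Finset.Ioi i, (((j:ℕ):ℤ) - ((i:ℕ):ℤ))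
      = GZaux.Wprod n (fun i : Fin n => -((i:ℕ):ℤ)) := by
    apply Finset.prod_congr rfl
    intro i _
    apply Finset.prod_congr rfl
    intro j _
    ring
  have e2 : ∏ i : Fin n, ∏ j ∈ Finset.Ioi i, (lam (i:ℕ) - lam (j:ℕ) + ((j:ℕ):ℤ) - ((i:ℕ):ℤ))
      = GZaux.Wprod n (fun i : Fin n => lam (i:ℕ) - ((i:ℕ):ℤ)) := by
    apply Finset.prod_congr rfl
    intro i _
    apply Finset.prod_congr rfl
    intro j _
    ring
  rw [e1, e2]
  exact GZaux.G n lam hlam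
end

section
/- In an enhanced Gelfand–Zetlin pattern, every connected component of the edge graph has a unique highest vertex or contains an entry from the first row; more precisely, no connected component contains two distinct entries in the same row that are both highest vertices of that component. -/
/-- Adjacency relation on positions `(i, j)` (row `i`, column `j`) of a triangular
array, determined by the edge predicates `eUL` (an edge from `(i,j)` up-left to
`(i-1,j)`) and `eUR` (an edge from `(i,j)` up-right to `(i-1,j+1)`). -/
def adjOf (eUL eUR : ℕ → ℕ → Prop) (p q : ℕ × ℕ) : Prop :=
  (q.1 = p.1 + 1 ∧ ((q.2 = p.2 ∧ eUL q.1 q.2) ∨ (p.2 = q.2 + 1 ∧ eUR q.1 q.2))) ∨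
  (p.1 = q.1 + 1 ∧ ((p.2 = q.2 ∧ eUL p.1 p.2) ∨ (q.2 = p.2 + 1 ∧ eUR p.1 p.2)))

/-- An enhanced Gelfand–Zetlin pattern (Definition 2.6 of Presnova–Smirnov): a
triangular integer array `a i j` (rows `i = 0, …, n-1`, valid positions `i + j < n`,
row `0` being the top row), together with a set of encircled entries `circ` and sets
of edges `edgeUL`, `edgeUR` joining equal neighboring entries in consecutive rows
(`edgeUL i j` joins `(i,j)` with `(i-1,j)`, and `edgeUR i j` joins `(i,j)` with
`(i-1,j+1)`), subject to conditions (1)–(8). -/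
structure EnhancedGZ (n : ℕ) where
  a : ℕ → ℕ → ℤ
  circ : ℕ → ℕ → Prop
  edgeUL : ℕ → ℕ → Prop
  edgeUR : ℕ → ℕ → Prop
  /-- interlacing inequalities of a GZ pattern -/
  interlace : ∀ i j, 1 ≤ i → i + j < n → a (i-1) j ≤ a i j ∧ a i j ≤ a (i-1) (j+1)
  edgeUL_valid : ∀ i j, edgeUL i j → 1 ≤ i ∧ i + j < n
  edgeUR_valid : ∀ i j, edgeUR i j → 1 ≤ i ∧ i + j < n
  /-- (1) entries of the first row are encircled -/
  cond1 : ∀ j, j < n → circ 0 j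
  /-- (2) entries joined by an edge are equal, and the bottom one is encircled -/
  cond2UL : ∀ i j, edgeUL i j → a i j = a (i-1) j ∧ circ i j
  cond2UR : ∀ i j, edgeUR i j → a i j = a (i-1) (j+1) ∧ circ i j
  /-- (3) two row-neighbors are joined to the entry above them iff they are joined
  to the entry below them -/
  cond3 : ∀ i j, 1 ≤ i → (i + 1) + j < n →
    ((edgeUR i j ∧ edgeUL i (j+1)) ↔ (edgeUL (i+1) j ∧ edgeUR (i+1) j))
  /-- (4) two equal entries in the first row are joined to the entry below them -/
  cond4 : ∀ j, j + 1 < n → a 0 j = a 0 (j+1) → circ 1 j ∧ edgeUL 1 j ∧ edgeUR 1 j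
  /-- (5) in a triangle `(a, b; a)` with `a < b`, the bottom entry is encircled and
  joined to the upper-left entry -/
  cond5 : ∀ i j, 1 ≤ i → i + j < n → a (i-1) j < a (i-1) (j+1) → a i j = a (i-1) j →
    circ i j ∧ edgeUL i j
  /-- (6) in a triangle `(a, b; b)` with `a < b` and encircled bottom entry, there is
  an edge to the upper-right entry -/
  cond6 : ∀ i j, 1 ≤ i → i + j < n → a (i-1) j < a (i-1) (j+1) → a i j = a (i-1) (j+1) →
    circ i j → edgeUR i j
  /-- (7) in a triangle `(a, a; a)` whose two top entries are connected by a path of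
  edges, the bottom entry is encircled and joined to both -/
  cond7 : ∀ i j, 1 ≤ i → i + j < n → a (i-1) j = a i j → a (i-1) (j+1) = a i j →
    Relation.ReflTransGen (adjOf edgeUL edgeUR) (i-1, j) (i-1, j+1) →
    circ i j ∧ edgeUL i j ∧ edgeUR i j
  /-- (8) in a triangle `(a, a; a)` with encircled bottom entry, the bottom entry is
  joined to at least one of the top entries -/
  cond8 : ∀ i j, 1 ≤ i → i + j < n → a (i-1) j = a i j → a (i-1) (j+1) = a i j →
    circ i j → edgeUL i j ∨ edgeUR i j


section Aux

variable {e1 e2 : ℕ → ℕ → Prop}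

lemma adjOf_symm {p q : ℕ × ℕ} (h : adjOf e1 e2 p q) : adjOf e1 e2 q p := by
  unfold adjOf at *; tauto

lemma adjOf_row {p q : ℕ × ℕ} (h : adjOf e1 e2 p q) : q.1 = p.1 + 1 ∨ p.1 = q.1 + 1 := by
  unfold adjOf at h; tauto

lemma peak_edge {u x : ℕ × ℕ} (h : adjOf e1 e2 u x) (hr : x.1 = u.1 + 1) :
    (u.2 = x.2 ∧ e1 x.1 x.2) ∨ (u.2 = x.2 + 1 ∧ e2 x.1 x.2) := by
  unfold adjOf at h
  rcases h with ⟨h1, h2⟩ | ⟨h1, h2⟩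
  · tauto
  · omega

/-- row sum of a walk -/
def rsum (w : List (ℕ × ℕ)) : ℕ := (w.map Prod.fst).sum

lemma rsum_cons (a : ℕ × ℕ) (w : List (ℕ × ℕ)) : rsum (a :: w) = a.1 + rsum w := by
  simp [rsum]

lemma rsum_append (w1 w2 : List (ℕ × ℕ)) : rsum (w1 ++ w2) = rsum w1 + rsum w2 := by
  simp [rsum]

lemma reach_of_mem_chain {α : Type*} {r : α → α → Prop} {a b : α} {l : List α}
    (h : List.Chain r a l) (hb : b ∈ a :: l) : Relation.ReflTransGen r a b := by
  rcases List.mem_cons.mp hb with rfl | hb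
  · exact Relation.ReflTransGen.refl
  · exact List.IsChain.cons_induction (Relation.ReflTransGen r a) l h
      (fun x y hxy hx => hx.tail hxy) Relation.ReflTransGen.refl b hb

lemma chain_of_chain' {α : Type*} {r : α → α → Prop} {a : α} {l : List α}
    (h : List.Chain' r (a :: l)) : List.Chain r a l := h

lemma cons_of_head? {α : Type*} {w : List α} {p : α} (h : w.head? = some p) :
    ∃ t, w = p :: t := by
  cases w <;> simp_all

lemma head?_append_cons {α : Type*} (l1 : List α) (u : α) (z z' : List α) :
    (l1 ++ u :: z).head? = (l1 ++ u :: z').head? := by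
  cases l1 <;> simp

lemma exists_peak {α : Type*} (f : α → ℕ) (r : α → α → Prop)
    (hstep : ∀ a b, r a b → f b = f a + 1 ∨ f a = f b + 1) :
    ∀ (rest : List α) (u x q : α), List.Chain' r (u :: x :: rest) → f x = f u + 1 →
      (x :: rest).getLast? = some q → f q ≤ f u →
      ∃ l1 u' x' v' l2, u :: x :: rest = l1 ++ u' :: x' :: v' :: l2 ∧
        f x' = f u' + 1 ∧ f x' = f v' + 1 := by
  intro rest
  induction rest with
  | nil =>
    intro u x q hc hx hlast hq
    simp only [List.getLast?_singleton, Option.some.injEq] at hlast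
    subst hlast
    omega
  | cons v rest ih =>
    intro u x q hc hx hlast hq
    have hc1 := List.isChain_cons_cons.mp hc
    have hc2 := List.isChain_cons_cons.mp hc1.2
    rcases hstep x v hc2.1 with hv | hv
    · -- ascend, recurse
      obtain ⟨l1, u', x', v', l2, hdec, h1, h2⟩ :=
        ih x v q hc1.2 hv (by rwa [List.getLast?_cons_cons] at hlast) (by omega)
      exact ⟨u :: l1, u', x', v', l2, by rw [List.cons_append, ← hdec], h1, h2⟩
    · -- peak at x
      exact ⟨[], u, x, v, rest, rfl, hx, hv⟩

end Aux
lemma key_lemma (n : ℕ) (P : EnhancedGZ n) (i : ℕ) (hi : 1 ≤ i) :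
    ∀ (N : ℕ) (l : List (ℕ × ℕ)) (p q : ℕ × ℕ), rsum (p :: l) ≤ N →
      List.Chain' (adjOf P.edgeUL P.edgeUR) (p :: l) →
      (∀ z ∈ p :: l, i ≤ z.1) → p.1 = i → (p :: l).getLast? = some q → q.1 = i → p ≠ q →
      ∃ x, Relation.ReflTransGen (adjOf P.edgeUL P.edgeUR) p x ∧ x.1 < i := by
  set adj := adjOf P.edgeUL P.edgeUR with hadj
  intro N
  induction N with
  | zero =>
    intro l p q hN _ _ hp _ _ _
    rw [rsum_cons] at hN
    omega
  | succ N ih =>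
    intro l p q hN hc hrows hp hlast hq hpq
    -- l is nonempty
    cases l with
    | nil =>
      simp only [List.getLast?_singleton, Option.some.injEq] at hlast
      exact absurd hlast hpq
    | cons x0 l' =>
      have hadjpx0 : adj p x0 := (List.isChain_cons_cons.mp hc).1
      have hx0row : x0.1 = p.1 + 1 := by
        rcases adjOf_row hadjpx0 with h | h
        · exact h
        · have := hrows x0 (by simp); omega
      -- find a peak
      obtain ⟨l1, u, x, v, l2, hdec, hxu, hxv⟩ :=
        exists_peak Prod.fst adj (fun a b h => adjOf_row h) l' p x0 q hc hx0row
          (by rwa [List.getLast?_cons_cons] at hlast) (by omega)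
      -- basic facts from the decomposition
      have hrows' : ∀ z ∈ l1 ++ u :: x :: v :: l2, i ≤ z.1 := by rw [← hdec]; exact hrows
      have hiu : i ≤ u.1 := hrows' u (by simp)
      have hchain : List.Chain' adj (l1 ++ u :: x :: v :: l2) := by rw [← hdec]; exact hc
      obtain ⟨hc1, hc2, hlink⟩ := List.isChain_append.mp hchain
      have hux : adj u x := (List.isChain_cons_cons.mp hc2).1
      have hxv' : adj x v := (List.isChain_cons_cons.mp (List.isChain_cons_cons.mp hc2).2).1
      have hcvl2 : List.Chain' adj (v :: l2) :=
        (List.isChain_cons_cons.mp (List.isChain_cons_cons.mp hc2).2).2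
      have hlast' : (v :: l2).getLast? = some q := by
        rw [hdec, List.getLast?_append_cons, List.getLast?_cons_cons,
          List.getLast?_cons_cons] at hlast
        exact hlast
      have hrs : rsum (p :: x0 :: l') = rsum l1 + (u.1 + (x.1 + (v.1 + rsum l2))) := by
        rw [hdec, rsum_append, rsum_cons, rsum_cons, rsum_cons]
      have hu := peak_edge hux hxu
      have hv := peak_edge (adjOf_symm hxv') hxv
      by_cases huv : u = v
      · -- backtrack: remove x and v
        set w' : List (ℕ × ℕ) := l1 ++ u :: l2 with hw'
        have hcw' : List.Chain' adj w' := by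
          refine List.isChain_append.mpr ⟨hc1, ?_, ?_⟩
          · rw [huv]; exact hcvl2
          · intro a ha b hb
            simp only [List.head?_cons, Option.mem_def, Option.some.injEq] at hb
            subst hb
            exact hlink a ha u (by simp)
        have hhead : w'.head? = some p := by
          rw [hw', head?_append_cons _ _ _ (x :: v :: l2), ← hdec]; rfl
        obtain ⟨t, ht⟩ := cons_of_head? hhead
        have hlw : (p :: t).getLast? = some q := by
          rw [← ht, hw', List.getLast?_append_cons]
          cases l2 with
          | nil =>
            simp only [List.getLast?_singleton, Option.some.injEq]
            simp only [List.getLast?_singleton, Option.some.injEq] at hlast'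
            rw [huv]; exact hlast'
          | cons c l2' =>
            rw [List.getLast?_cons_cons]
            rwa [List.getLast?_cons_cons] at hlast'
        refine ih t p q ?_ (by rw [← ht]; exact hcw') ?_ hp hlw hq hpq
        · have : rsum (p :: t) = rsum l1 + (u.1 + rsum l2) := by
            rw [← ht, hw', rsum_append, rsum_cons]
          have hx1 : 1 ≤ x.1 := by omega
          omega
        · intro z hz
          rw [← ht] at hz
          simp only [hw', List.mem_append, List.mem_cons] at hz
          refine hrows' z ?_
          simp only [List.mem_append, List.mem_cons]
          tauto
      · -- genuine peak: lift it
        have hboth : P.edgeUL x.1 x.2 ∧ P.edgeUR x.1 x.2 ∧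
            ((u.2 = x.2 ∧ v.2 = x.2 + 1) ∨ (u.2 = x.2 + 1 ∧ v.2 = x.2)) := by
          rcases hu with ⟨hu2, hUL⟩ | ⟨hu2, hUR⟩ <;> rcases hv with ⟨hv2, hUL'⟩ | ⟨hv2, hUR'⟩
          · exact absurd (Prod.ext (by omega) (by omega)) huv
          · exact ⟨hUL, hUR', Or.inl ⟨hu2, hv2⟩⟩
          · exact ⟨hUL', hUR, Or.inr ⟨hu2, hv2⟩⟩
          · exact absurd (Prod.ext (by omega) (by omega)) huv
        obtain ⟨hUL, hUR, horient⟩ := hboth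
        have hvalid : x.1 + x.2 < n := (P.edgeUL_valid x.1 x.2 hUL).2
        have hcond3 : P.edgeUR u.1 x.2 ∧ P.edgeUL u.1 (x.2 + 1) := by
          refine (P.cond3 u.1 x.2 (by omega) (by omega)).mpr ?_
          have h1 : u.1 + 1 = x.1 := by omega
          rw [h1]
          exact ⟨hUL, hUR⟩
        set x' : ℕ × ℕ := (u.1 - 1, x.2 + 1) with hx'
        have haux1 : adj (u.1, x.2) x' := by
          rw [hadj]
          exact Or.inr ⟨by simp [hx']; omega, Or.inr ⟨by simp [hx'], hcond3.1⟩⟩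
        have haux2 : adj x' (u.1, x.2 + 1) := by
          rw [hadj]
          exact Or.inl ⟨by simp [hx']; omega, Or.inl ⟨by simp [hx'], hcond3.2⟩⟩
        have hlinks : adj u x' ∧ adj x' v := by
          rcases horient with ⟨h1, h2⟩ | ⟨h1, h2⟩
          · have hueq : u = (u.1, x.2) := Prod.ext rfl h1
            have hveq : v = (u.1, x.2 + 1) := Prod.ext (by omega) h2
            rw [hueq, hveq]; exact ⟨haux1, haux2⟩
          · have hueq : u = (u.1, x.2 + 1) := Prod.ext rfl h1
            have hveq : v = (u.1, x.2) := Prod.ext (by omega) h2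
            rw [hueq, hveq]
            exact ⟨adjOf_symm haux2, adjOf_symm haux1⟩
        -- the new walk
        set w' : List (ℕ × ℕ) := l1 ++ u :: x' :: v :: l2 with hw'
        have hcw' : List.Chain' adj w' := by
          refine List.isChain_append.mpr ⟨hc1, ?_, ?_⟩
          · exact List.isChain_cons_cons.mpr ⟨hlinks.1, List.isChain_cons_cons.mpr ⟨hlinks.2, hcvl2⟩⟩
          · intro a ha b hb
            simp only [List.head?_cons, Option.mem_def, Option.some.injEq] at hb
            subst hb
            exact hlink a ha u (by simp)
        have hhead : w'.head? = some p := by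
          rw [hw', head?_append_cons _ _ _ (x :: v :: l2), ← hdec]; rfl
        obtain ⟨t, ht⟩ := cons_of_head? hhead
        by_cases hlow : u.1 - 1 < i
        · -- found a vertex above row i
          refine ⟨x', ?_, by simpa [hx'] using hlow⟩
          refine reach_of_mem_chain (chain_of_chain' (by rw [← ht]; exact hcw')) ?_
          rw [← ht, hw']
          simp
        · refine ih t p q ?_ (by rw [← ht]; exact hcw') ?_ hp ?_ hq hpq
          · have heq : rsum (p :: t) = rsum l1 + (u.1 + (x'.1 + (v.1 + rsum l2))) := by
              rw [← ht, hw', rsum_append, rsum_cons, rsum_cons, rsum_cons]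
            have hx'1 : x'.1 = u.1 - 1 := rfl
            omega
          · intro z hz
            rw [← ht, hw'] at hz
            simp only [List.mem_append, List.mem_cons] at hz
            rcases hz with hz | hz | hz | hz | hz
            · exact hrows' z (by simp [hz])
            · exact hrows' z (by simp [hz])
            · rw [hz]; simp [hx']; omega
            · exact hrows' z (by simp [hz])
            · exact hrows' z (by simp [hz])
          · rw [← ht, hw', List.getLast?_append_cons, List.getLast?_cons_cons,
              List.getLast?_cons_cons]
            rw [← List.getLast?_cons_cons (b := v) (a := x)] at hlast'
            rwa [List.getLast?_cons_cons] at hlast'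
/-- In an enhanced Gelfand–Zetlin pattern, no connected component of
the edge graph contains two distinct entries in the same row that are both highest
vertices of the component — unless the component meets the first row. Hence every
connected component has a unique highest vertex or contains a first-row entry. -/
theorem enhancedGZ_unique_highest (n : ℕ) (P : EnhancedGZ n) (p q : ℕ × ℕ)
    (hp : p.1 + p.2 < n) (hq : q.1 + q.2 < n)
    (hconn : Relation.ReflTransGen (adjOf P.edgeUL P.edgeUR) p q)
    (hrow : p.1 = q.1)
    (hptop : ∀ r, Relation.ReflTransGen (adjOf P.edgeUL P.edgeUR) p r → p.1 ≤ r.1)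
    (hqtop : ∀ r, Relation.ReflTransGen (adjOf P.edgeUL P.edgeUR) q r → q.1 ≤ r.1) :
    p = q ∨ p.1 = 0 := by
  by_cases hpq : p = q
  · exact Or.inl hpq
  by_cases hp0 : p.1 = 0
  · exact Or.inr hp0
  exfalso
  have hi : 1 ≤ p.1 := Nat.one_le_iff_ne_zero.mpr hp0
  obtain ⟨l, hchain, hlast⟩ := List.exists_isChain_cons_of_relationReflTransGen hconn
  have hrows : ∀ z ∈ p :: l, p.1 ≤ z.1 := fun z hz =>
    hptop z (reach_of_mem_chain hchain hz)
  obtain ⟨x, hx1, hx2⟩ := key_lemma n P p.1 hi (rsum (p :: l)) l p q le_rfl hchain hrows rfl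
    (by rw [List.getLast?_eq_getLast_of_ne_nil (List.cons_ne_nil p l), hlast])
    hrow.symm hpq
  exact absurd (hptop x hx1) (by omega)
end
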